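/- Let X and Y be random variables on a probability space (Ω, μ) (μ a probability measure) taking values in finite types 𝒳 and 𝒴; let S = {(x, y) : P(X = x, Y = y) > 0} be the support of (X, Y). Let f : 𝒳 × 𝒴 → 𝒵₁, g : 𝒳 × 𝒴 → 𝒵₂, h : 𝒳 × 𝒴 → 𝒵 (𝒵₁, 𝒵₂, 𝒵 finite types) satisfy: (i) for all (x, y), (x, y') ∈ S, h(x, y) = h(x, y') if and only if f(x, y) = f(x, y'); and (ii) for all (x, y), (x', y) ∈ S, h(x, y) = h(x', y) if and only if g(x, y) = g(x', y). Then H[h(X, Y) | X] = H[f(X, Y) | X] and H[h(X, Y) | Y] = H[g(X, Y) | Y]. -/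
import Mathlib


open MeasureTheory

/-- Shannon entropy of a random variable taking values in a finite type. -/
noncomputable def ent {Ω : Type*} [MeasurableSpace Ω] (μ : Measure Ω)
    {α : Type*} [Fintype α] (X : Ω → α) : ℝ :=
  ∑ a : α, Real.negMulLog ((μ (X ⁻¹' {a})).toReal)

/-- `condEnt μ X Y` is the conditional Shannon entropy `H[Y | X]`. -/
noncomputable def condEnt {Ω : Type*} [MeasurableSpace Ω] (μ : Measure Ω)
    {α β : Type*} [Fintype α] [Fintype β] (X : Ω → α) (Y : Ω → β) : ℝ :=
  ent μ (fun ω => (X ω, Y ω)) - ent μ X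

open Finset

attribute [local instance] Classical.propDecidable

private lemma sum_negMulLog_group_eq {β γ γ' : Type*} [Fintype β] [Fintype γ] [Fintype γ']
    (w : β → ℝ) (hw : ∀ b, 0 ≤ w b) (F : β → γ) (G : β → γ')
    (hFG : ∀ b b', 0 < w b → 0 < w b' → (F b = F b' ↔ G b = G b')) :
    ∑ c : γ, Real.negMulLog (∑ b ∈ univ.filter (fun b => F b = c), w b)
      = ∑ c : γ', Real.negMulLog (∑ b ∈ univ.filter (fun b => G b = c), w b) := by
  classical
  set m : γ → ℝ := fun c => ∑ b ∈ univ.filter (fun b => F b = c), w b with hm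
  set n : γ' → ℝ := fun c => ∑ b ∈ univ.filter (fun b => G b = c), w b with hn
  have hm0 : ∀ c, 0 ≤ m c := fun c => Finset.sum_nonneg fun b _ => hw b
  have hn0 : ∀ c, 0 ≤ n c := fun c => Finset.sum_nonneg fun b _ => hw b
  have key : ∀ b, 0 < w b → m (F b) = n (G b) := by
    intro b hb
    have h1 : m (F b) = ∑ b' ∈ univ.filter (fun b' => F b' = F b ∧ 0 < w b'), w b' := by
      refine (Finset.sum_subset ?_ ?_).symm
      · intro x hx; simp only [mem_filter, mem_univ, true_and] at hx ⊢; exact hx.1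
      · intro x hx hx'
        simp only [mem_filter, mem_univ, true_and, not_and] at hx hx'
        have := hx' hx
        linarith [hw x]
    have h2 : n (G b) = ∑ b' ∈ univ.filter (fun b' => G b' = G b ∧ 0 < w b'), w b' := by
      refine (Finset.sum_subset ?_ ?_).symm
      · intro x hx; simp only [mem_filter, mem_univ, true_and] at hx ⊢; exact hx.1
      · intro x hx hx'
        simp only [mem_filter, mem_univ, true_and, not_and] at hx hx'
        have := hx' hx
        linarith [hw x]
    rw [h1, h2]
    apply Finset.sum_congr
    · apply Finset.filter_congr
      intro b' _
      constructor
      · rintro ⟨hFb, hwb⟩; exact ⟨(hFG b' b hwb hb).mp hFb, hwb⟩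
      · rintro ⟨hGb, hwb⟩; exact ⟨(hFG b' b hwb hb).mpr hGb, hwb⟩
    · intros; rfl
  have hexF : ∀ c, 0 < m c → ∃ b, 0 < w b ∧ F b = c := by
    intro c hc
    by_contra hcon
    push_neg at hcon
    have : m c = 0 := by
      apply Finset.sum_eq_zero
      intro b hb
      simp only [mem_filter, mem_univ, true_and] at hb
      by_contra hwb
      exact hcon b (lt_of_le_of_ne (hw b) (Ne.symm hwb)) hb
    linarith
  have hexG : ∀ c, 0 < n c → ∃ b, 0 < w b ∧ G b = c := by
    intro c hc
    by_contra hcon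
    push_neg at hcon
    have : n c = 0 := by
      apply Finset.sum_eq_zero
      intro b hb
      simp only [mem_filter, mem_univ, true_and] at hb
      by_contra hwb
      exact hcon b (lt_of_le_of_ne (hw b) (Ne.symm hwb)) hb
    linarith
  have hL : ∑ c ∈ univ.filter (fun c => 0 < m c), Real.negMulLog (m c)
      = ∑ c : γ, Real.negMulLog (m c) := by
    refine Finset.sum_filter_of_ne ?_
    intro c _ hne
    rcases (hm0 c).lt_or_eq with h | h
    · exact h
    · exact absurd (by rw [← h, Real.negMulLog_zero]) hne
  have hR : ∑ c ∈ univ.filter (fun c => 0 < n c), Real.negMulLog (n c)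
      = ∑ c : γ', Real.negMulLog (n c) := by
    refine Finset.sum_filter_of_ne ?_
    intro c _ hne
    rcases (hn0 c).lt_or_eq with h | h
    · exact h
    · exact absurd (by rw [← h, Real.negMulLog_zero]) hne
  rw [← hL, ← hR]
  refine Finset.sum_bij (fun c hc => G (hexF c (by simpa using hc)).choose) ?_ ?_ ?_ ?_
  · intro c hc
    obtain ⟨hwb, hFb⟩ := (hexF c (by simpa using hc)).choose_spec
    simp only [mem_filter, mem_univ, true_and]
    rw [← key _ hwb, hFb]
    simpa using hc
  · intro c₁ h₁ c₂ h₂ heq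
    obtain ⟨hw1, hF1⟩ := (hexF c₁ (by simpa using h₁)).choose_spec
    obtain ⟨hw2, hF2⟩ := (hexF c₂ (by simpa using h₂)).choose_spec
    rw [← hF1, ← hF2]
    exact (hFG _ _ hw1 hw2).mpr heq
  · intro c' hc'
    obtain ⟨b, hwb, hGb⟩ := hexG c' (by simpa using hc')
    have hmFb : 0 < m (F b) := by rw [key b hwb, hGb]; simpa using hc'
    refine ⟨F b, by simpa using hmFb, ?_⟩
    obtain ⟨hw1, hF1⟩ := (hexF (F b) (by simpa using hmFb)).choose_spec
    rw [← hGb]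
    exact (hFG _ _ hw1 hwb).mp hF1
  · intro c hc
    obtain ⟨hwb, hFb⟩ := (hexF c (by simpa using hc)).choose_spec
    rw [← key _ hwb, hFb]

private lemma meas_pre_eq {Ω α β γ : Type*} [MeasurableSpace Ω] (μ : Measure Ω)
    [IsFiniteMeasure μ] [Fintype β] [Fintype γ]
    [MeasurableSpace α] [MeasurableSingletonClass α]
    [MeasurableSpace β] [MeasurableSingletonClass β]
    (A : Ω → α) (B : Ω → β) (hA : Measurable A) (hB : Measurable B)
    (K : α × β → γ) (a : α) (c : γ) :
    (μ ((fun ω => (A ω, K (A ω, B ω))) ⁻¹' {(a, c)})).toReal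
      = ∑ b ∈ univ.filter (fun b => K (a, b) = c), (μ {ω | A ω = a ∧ B ω = b}).toReal := by
  classical
  have hset : ((fun ω => (A ω, K (A ω, B ω))) ⁻¹' {(a, c)})
      = ⋃ b ∈ univ.filter (fun b => K (a, b) = c), {ω | A ω = a ∧ B ω = b} := by
    ext ω
    simp only [Set.mem_preimage, Set.mem_singleton_iff, Prod.mk.injEq, Set.mem_iUnion,
      mem_filter, mem_univ, true_and, Set.mem_setOf_eq]
    constructor
    · rintro ⟨rfl, h2⟩; exact ⟨B ω, h2, rfl, rfl⟩
    · rintro ⟨b, hb, rfl, rfl⟩; exact ⟨rfl, hb⟩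
  rw [hset, measure_biUnion_finset ?_ ?_]
  · rw [ENNReal.toReal_sum (fun b _ => measure_ne_top μ _)]
  · intro b₁ h₁ b₂ h₂ hne
    simp only [Function.onFun]
    apply Set.disjoint_left.mpr
    rintro ω ⟨_, h1⟩ ⟨_, h2⟩
    exact hne (h1 ▸ h2 ▸ rfl)
  · intro b _
    exact (hA (measurableSet_singleton a)).inter (hB (measurableSet_singleton b))

private lemma ent_pair_eq {Ω α β γ γ' : Type*} [MeasurableSpace Ω] (μ : Measure Ω)
    [IsProbabilityMeasure μ]
    [Fintype α] [Fintype β] [Fintype γ] [Fintype γ']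
    [MeasurableSpace α] [MeasurableSingletonClass α]
    [MeasurableSpace β] [MeasurableSingletonClass β]
    (A : Ω → α) (B : Ω → β) (hA : Measurable A) (hB : Measurable B)
    (F : α × β → γ) (G : α × β → γ')
    (hyp : ∀ a b b', 0 < μ {ω | A ω = a ∧ B ω = b} → 0 < μ {ω | A ω = a ∧ B ω = b'} →
      (F (a, b) = F (a, b') ↔ G (a, b) = G (a, b'))) :
    ent μ (fun ω => (A ω, F (A ω, B ω))) = ent μ (fun ω => (A ω, G (A ω, B ω))) := by
  classical
  unfold ent
  rw [Fintype.sum_prod_type, Fintype.sum_prod_type]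
  refine Finset.sum_congr rfl fun a _ => ?_
  have hpos : ∀ b : β, 0 < (μ {ω | A ω = a ∧ B ω = b}).toReal →
      0 < μ {ω | A ω = a ∧ B ω = b} := fun b hb => (ENNReal.toReal_pos_iff.mp hb).1
  calc ∑ c : γ, Real.negMulLog ((μ ((fun ω => (A ω, F (A ω, B ω))) ⁻¹' {(a, c)})).toReal)
      = ∑ c : γ, Real.negMulLog (∑ b ∈ univ.filter (fun b => F (a, b) = c),
          (μ {ω | A ω = a ∧ B ω = b}).toReal) := by
        refine Finset.sum_congr rfl fun c _ => ?_
        rw [meas_pre_eq μ A B hA hB F a c]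
    _ = ∑ c : γ', Real.negMulLog (∑ b ∈ univ.filter (fun b => G (a, b) = c),
          (μ {ω | A ω = a ∧ B ω = b}).toReal) := by
        apply sum_negMulLog_group_eq (fun b => (μ {ω | A ω = a ∧ B ω = b}).toReal)
          (fun b => ENNReal.toReal_nonneg) (fun b => F (a, b)) (fun b => G (a, b))
        intro b b' hb hb'
        exact hyp a b b' (hpos b hb) (hpos b' hb')
    _ = ∑ c : γ', Real.negMulLog ((μ ((fun ω => (A ω, G (A ω, B ω))) ⁻¹' {(a, c)})).toReal) := by
        refine Finset.sum_congr rfl fun c _ => ?_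
        rw [meas_pre_eq μ A B hA hB G a c]

/-- Second part of Lemma 4 (lemma_rooks): if `h` induces the same modified rook's
graph as the pair `(f, g)` on the support of `(X, Y)` (compatibility), then
`H[h(X,Y) | X] = H[f(X,Y) | X]` and `H[h(X,Y) | Y] = H[g(X,Y) | Y]`. -/
theorem compatible_functions_condEnt_eq
    {Ω : Type*} [MeasurableSpace Ω] (μ : Measure Ω) [IsProbabilityMeasure μ]
    {𝒳 𝒴 𝒵₁ 𝒵₂ 𝒵 : Type*} [Fintype 𝒳] [Fintype 𝒴] [Fintype 𝒵₁] [Fintype 𝒵₂] [Fintype 𝒵]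
    [MeasurableSpace 𝒳] [MeasurableSingletonClass 𝒳]
    [MeasurableSpace 𝒴] [MeasurableSingletonClass 𝒴]
    (X : Ω → 𝒳) (Y : Ω → 𝒴) (hX : Measurable X) (hY : Measurable Y)
    (f : 𝒳 × 𝒴 → 𝒵₁) (g : 𝒳 × 𝒴 → 𝒵₂) (h : 𝒳 × 𝒴 → 𝒵)
    (hi : ∀ p ∈ {p : 𝒳 × 𝒴 | 0 < μ {ω | X ω = p.1 ∧ Y ω = p.2}},
      ∀ q ∈ {p : 𝒳 × 𝒴 | 0 < μ {ω | X ω = p.1 ∧ Y ω = p.2}},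
      p.1 = q.1 → (h p = h q ↔ f p = f q))
    (hii : ∀ p ∈ {p : 𝒳 × 𝒴 | 0 < μ {ω | X ω = p.1 ∧ Y ω = p.2}},
      ∀ q ∈ {p : 𝒳 × 𝒴 | 0 < μ {ω | X ω = p.1 ∧ Y ω = p.2}},
      p.2 = q.2 → (h p = h q ↔ g p = g q)) :
    condEnt μ X (fun ω => h (X ω, Y ω)) = condEnt μ X (fun ω => f (X ω, Y ω)) ∧
    condEnt μ Y (fun ω => h (X ω, Y ω)) = condEnt μ Y (fun ω => g (X ω, Y ω)) := by
  constructor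
  · have := ent_pair_eq μ X Y hX hY h f (by
      intro a b b' hb hb'
      exact hi (a, b) hb (a, b') hb' rfl)
    unfold condEnt
    rw [this]
  · have hswap : ∀ (a : 𝒳) (b : 𝒴),
        {ω | Y ω = b ∧ X ω = a} = {ω | X ω = a ∧ Y ω = b} := by
      intro a b; ext ω; exact and_comm
    have := ent_pair_eq μ Y X hY hX (fun p => h (p.2, p.1)) (fun p => g (p.2, p.1)) (by
      intro b a a' ha ha'
      rw [hswap a b] at ha
      rw [hswap a' b] at ha'
      exact hii (a, b) ha (a', b) ha' rfl)
    unfold condEnt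
    rw [show (fun ω => (Y ω, h (X ω, Y ω)))
        = (fun ω => (Y ω, (fun p : 𝒴 × 𝒳 => h (p.2, p.1)) (Y ω, X ω))) from rfl,
      show (fun ω => (Y ω, g (X ω, Y ω)))
        = (fun ω => (Y ω, (fun p : 𝒴 × 𝒳 => g (p.2, p.1)) (Y ω, X ω))) from rfl, this]
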